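/- (Abstract saturation of DPI for monotone metrics.) Let J₁, J₂ be positive invertible operators on Hilbert spaces H₁, H₂ and Φ: H₁ → H₂ a linear map with Φ*J₂Φ ≤ J₁. Then for any vector A ∈ H₁: ⟨A, J₁A⟩ − ⟨ΦA, J₂ΦA⟩ ≥ ⟨A − J₁^{-1}Φ*J₂ΦA, J₁(A − J₁^{-1}Φ*J₂ΦA)⟩. -/

import Mathlib

open ContinuousLinearMap in
/-- abstract saturation of DPI for monotone metrics: let `J₁`,
`J₂` be positive invertible operators on finite-dimensional Hilbert spaces
`H₁`, `H₂` (with `K₁` the inverse of `J₁`) and `Φ : H₁ → H₂` linear with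
`Φ*J₂Φ ≤ J₁`. Then for every `A ∈ H₁`, with `B = A − J₁⁻¹Φ*J₂ΦA`,
`⟨A, J₁A⟩ − ⟨ΦA, J₂ΦA⟩ ≥ ⟨B, J₁B⟩`. -/
theorem stmt11 {H₁ H₂ : Type*}
    [NormedAddCommGroup H₁] [InnerProductSpace ℂ H₁] [FiniteDimensional ℂ H₁]
    [NormedAddCommGroup H₂] [InnerProductSpace ℂ H₂] [FiniteDimensional ℂ H₂]
    (J₁ : H₁ →L[ℂ] H₁) (J₂ : H₂ →L[ℂ] H₂) (Φ : H₁ →L[ℂ] H₂)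
    (hJ₁ : J₁.IsPositive) (hJ₂ : J₂.IsPositive)
    (K₁ : H₁ →L[ℂ] H₁) (hK₁ : J₁.comp K₁ = 1) (hK₁' : K₁.comp J₁ = 1)
    (hDPI : (J₁ - (ContinuousLinearMap.adjoint Φ).comp (J₂.comp Φ)).IsPositive)
    (A : H₁) :
    (inner ℂ (A - K₁ (ContinuousLinearMap.adjoint Φ (J₂ (Φ A))))
        (J₁ (A - K₁ (ContinuousLinearMap.adjoint Φ (J₂ (Φ A))))) : ℂ).re
      ≤ (inner ℂ A (J₁ A) : ℂ).re - (inner ℂ (Φ A) (J₂ (Φ A)) : ℂ).re := by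
  set T : H₁ →L[ℂ] H₁ := (ContinuousLinearMap.adjoint Φ).comp (J₂.comp Φ) with hT
  have hTapp : ∀ y : H₁, T y = ContinuousLinearMap.adjoint Φ (J₂ (Φ y)) := fun y => rfl
  set x : H₁ := K₁ (ContinuousLinearMap.adjoint Φ (J₂ (Φ A))) with hx
  have hJ1x : J₁ x = T A := by
    have := congrArg (fun S : H₁ →L[ℂ] H₁ => S (T A)) hK₁
    simpa [hx, hTapp] using this
  have hres : ∀ a b : H₁, (inner ℂ a b : ℂ).re = (inner ℂ b a : ℂ).re := fun a b => by
    have := inner_re_symm (𝕜 := ℂ) a b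
    simpa using this
  have hTsa : IsSelfAdjoint T := by
    rw [ContinuousLinearMap.isSelfAdjoint_iff', hT,
      ContinuousLinearMap.adjoint_comp, ContinuousLinearMap.adjoint_comp,
      ContinuousLinearMap.adjoint_adjoint, hJ₂.isSelfAdjoint.adjoint_eq,
      ContinuousLinearMap.comp_assoc]
  -- ⟪A, T A⟫ = ⟪Φ A, J₂ Φ A⟫
  have hAT : (inner ℂ A (T A) : ℂ) = inner ℂ (Φ A) (J₂ (Φ A)) := by
    rw [hTapp, ContinuousLinearMap.adjoint_inner_right]
  -- T y inner ℂ identities via adjoint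
  have hTleft : ∀ a b : H₁, (inner ℂ (T a) b : ℂ) = inner ℂ (J₂ (Φ a)) (Φ b) := fun a b => by
    rw [hTapp, ContinuousLinearMap.adjoint_inner_left]
  -- key quantities
  set p : ℝ := (inner ℂ A (T A) : ℂ).re with hp
  set q : ℝ := (inner ℂ x (J₁ x) : ℂ).re with hq
  set r : ℝ := (inner ℂ (T x) x : ℂ).re with hr
  -- h2 : r ≤ q
  have h2 : r ≤ q := by
    have h0 : 0 ≤ (inner ℂ ((J₁ - T) x) x : ℂ).re := by
      have := hDPI.inner_nonneg_left x
      simpa [inner_sub_left, inner_sub_right] using (Complex.nonneg_iff.mp this).1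
    have h0' : (inner ℂ ((J₁ - T) x) x : ℂ) = inner ℂ (J₁ x) x - inner ℂ (T x) x := by
      simp [inner_sub_left]
    rw [h0', Complex.sub_re] at h0
    have hqq : q = (inner ℂ (J₁ x) x : ℂ).re := hres x (J₁ x)
    linarith [h0, hqq, hr]
  -- h1 : 0 ≤ p - 2q + r
  have h1 : 0 ≤ p - 2 * q + r := by
    have hpos : 0 ≤ (inner ℂ (T (A - x)) (A - x) : ℂ).re := by
      rw [hTleft]
      have := hJ₂.inner_nonneg_left (Φ (A - x))
      simpa [inner_sub_left, inner_sub_right] using (Complex.nonneg_iff.mp this).1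
    have e1 : (inner ℂ (T A) x : ℂ).re = q := by
      rw [← hJ1x]; exact hres _ _
    have e2 : (inner ℂ (T x) A : ℂ).re = q := by
      rw [← hTsa.adjoint_eq, ContinuousLinearMap.adjoint_inner_left, ← hJ1x]
    have e3 : (inner ℂ (T A) A : ℂ).re = p := hres _ _
    simp only [map_sub, inner_sub_left, inner_sub_right, Complex.sub_re] at hpos
    rw [e1, e2, e3] at hpos
    linarith [hpos, hr]
  have hqp : q ≤ p := by linarith
  -- expand the goal
  have e4 : (inner ℂ A (J₁ x) : ℂ).re = p := by rw [hJ1x, hp]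
  have e5 : (inner ℂ x (J₁ A) : ℂ).re = p := by
    rw [hres, ← ContinuousLinearMap.adjoint_inner_right, hJ₁.isSelfAdjoint.adjoint_eq, hJ1x, hp]
  calc (inner ℂ (A - x) (J₁ (A - x)) : ℂ).re
      = (inner ℂ A (J₁ A) : ℂ).re - p - p + q := by
        simp only [map_sub, inner_sub_left, inner_sub_right, Complex.sub_re]
        rw [e4, e5]
        ring
    _ ≤ (inner ℂ A (J₁ A) : ℂ).re - p := by linarith
    _ = (inner ℂ A (J₁ A) : ℂ).re - (inner ℂ (Φ A) (J₂ (Φ A)) : ℂ).re := by rw [hp, hAT]
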